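/- arXiv:1504.07679 — 6 statements merged into one kernel-verified Lean document; each statement's English description precedes it below -/
import Mathlib

section
/- Let g : (0,1] → ℝ be four times continuously differentiable with g(s) ≥ 0, g'(s) ≥ 0, g''(s) ≥ 0, g'''(s) ≥ 0 and g''''(s) ≥ 0 for all s ∈ (0,1]. For x ≥ 1 define F(x) = x⁻³·g(1/x) − x⁻¹·∫₀^{1/x} s·g(s) ds. Then F is four times differentiable on (1,∞), F(x) ≥ 0 for all x ≥ 1, and (−1)ⁿ·F⁽ⁿ⁾(x) ≥ 0 for n = 1, 2, 3, 4 and all x > 1. -/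
noncomputable section

open Set MeasureTheory Filter

namespace ReflectionAux

lemma iterWithin_eq_iter {f : ℝ → ℝ} {s : Set ℝ} {x : ℝ}
    (hs : s ∈ nhds x) (n : ℕ) :
    iteratedDerivWithin n f s x = iteratedDeriv n f x := by
  have h : iteratedFDerivWithin ℝ n f s x = iteratedFDeriv ℝ n f x := by
    rw [← iteratedFDerivWithin_univ, ← Set.univ_inter s, iteratedFDerivWithin_inter hs]
  rw [iteratedDerivWithin_eq_iteratedFDerivWithin, iteratedDeriv_eq_iteratedFDeriv, h]

/-- `x⁻¹ ^ k * g⁽ʲ⁾(x⁻¹)` -/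
def AA (g : ℝ → ℝ) (k j : ℕ) (x : ℝ) : ℝ := x⁻¹ ^ k * iteratedDeriv j g x⁻¹

/-- `x⁻¹ ^ k * ∫₀^{x⁻¹} s g(s) ds` -/
def CC (g : ℝ → ℝ) (k : ℕ) (x : ℝ) : ℝ :=
  x⁻¹ ^ k * ∫ s in (0:ℝ)..x⁻¹, s * g s

lemma AA_hasDerivAt (g : ℝ → ℝ) (k j : ℕ) (hk : 1 ≤ k) {x : ℝ} (hx : x ≠ 0)
    (hD : HasDerivAt (iteratedDeriv j g) (iteratedDeriv (j+1) g x⁻¹) x⁻¹) :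
    HasDerivAt (AA g k j) (-(k:ℝ) * AA g (k+1) j x - AA g (k+2) (j+1) x) x := by
  obtain ⟨m, rfl⟩ : ∃ m, k = m + 1 := ⟨k - 1, by omega⟩
  unfold AA
  have hinv : HasDerivAt (fun y : ℝ => y⁻¹) (-(x ^ 2)⁻¹) x := hasDerivAt_inv hx
  have h1 := hinv.pow (m+1)
  have h2 : HasDerivAt (fun y : ℝ => iteratedDeriv j g y⁻¹)
      (iteratedDeriv (j+1) g x⁻¹ * -(x ^ 2)⁻¹) x := HasDerivAt.comp x hD hinv
  refine (h1.mul h2).congr_deriv ?_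
  simp only [Nat.add_sub_cancel, ← inv_pow, Pi.pow_apply]
  push_cast
  ring

lemma CC_hasDerivAt (g : ℝ → ℝ) (k : ℕ) (hk : 1 ≤ k) {x : ℝ} (hx : x ≠ 0)
    (hG : HasDerivAt (fun v : ℝ => ∫ s in (0:ℝ)..v, s * g s) (x⁻¹ * g x⁻¹) x⁻¹) :
    HasDerivAt (CC g k) (-(k:ℝ) * CC g (k+1) x - AA g (k+3) 0 x) x := by
  obtain ⟨m, rfl⟩ : ∃ m, k = m + 1 := ⟨k - 1, by omega⟩
  unfold CC AA
  have hinv : HasDerivAt (fun y : ℝ => y⁻¹) (-(x ^ 2)⁻¹) x := hasDerivAt_inv hx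
  have h1 := hinv.pow (m+1)
  have h2 : HasDerivAt (fun y : ℝ => ∫ s in (0:ℝ)..y⁻¹, s * g s)
      (x⁻¹ * g x⁻¹ * -(x ^ 2)⁻¹) x := HasDerivAt.comp x hG hinv
  refine (h1.mul h2).congr_deriv ?_
  simp only [Nat.add_sub_cancel, ← inv_pow, iteratedDeriv_zero, Pi.pow_apply]
  push_cast
  ring

end ReflectionAux

open ReflectionAux

/-- For `g` four times continuously differentiable on (0,1] with all derivatives
up to order four nonnegative there, the reflected quantity
F(x) = x⁻³·g(1/x) − x⁻¹·∫₀^{1/x} s·g(s) ds is four times differentiable on (1,∞),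
nonnegative on [1,∞), and its derivatives alternate in sign. -/
theorem reflection_y_deriv_alternating (g : ℝ → ℝ)
    (hg : ContDiffOn ℝ 4 g (Set.Ioc (0:ℝ) 1))
    (hgn : ∀ n : ℕ, n ≤ 4 → ∀ s ∈ Set.Ioc (0:ℝ) 1,
      0 ≤ iteratedDerivWithin n g (Set.Ioc (0:ℝ) 1) s)
    (F : ℝ → ℝ)
    (hF : ∀ x : ℝ, 1 ≤ x →
      F x = x⁻¹ ^ 3 * g x⁻¹ - x⁻¹ * ∫ s in (0:ℝ)..x⁻¹, s * g s) :
    (∀ n : ℕ, n < 4 → ∀ x : ℝ, 1 < x → DifferentiableAt ℝ (iteratedDeriv n F) x) ∧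
    (∀ x : ℝ, 1 ≤ x → 0 ≤ F x) ∧
    (∀ n : ℕ, 1 ≤ n → n ≤ 4 → ∀ x : ℝ, 1 < x →
      0 ≤ (-1 : ℝ) ^ n * iteratedDeriv n F x) := by
  have hUS : Set.Ioo (0:ℝ) 1 ⊆ Set.Ioc (0:ℝ) 1 := Set.Ioo_subset_Ioc_self
  -- nonnegativity of plain iterated derivatives on the open interval
  have hpos : ∀ j : ℕ, j ≤ 4 → ∀ u ∈ Set.Ioo (0:ℝ) 1, 0 ≤ iteratedDeriv j g u := by
    intro j hj u hu
    rw [← iterWithin_eq_iter (Ioc_mem_nhds hu.1 hu.2) j]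
    exact hgn j hj u (hUS hu)
  have hg0 : ∀ u ∈ Set.Ioc (0:ℝ) 1, 0 ≤ g u := by
    intro u hu
    have := hgn 0 (by norm_num) u hu
    simpa [iteratedDerivWithin_zero] using this
  -- derivatives of the iterated derivatives of g on the open interval
  have hder : ∀ j : ℕ, j < 4 → ∀ u ∈ Set.Ioo (0:ℝ) 1,
      HasDerivAt (iteratedDeriv j g) (iteratedDeriv (j+1) g u) u := by
    intro j hj u hu
    have hgU : ContDiffOn ℝ 4 g (Set.Ioo (0:ℝ) 1) := hg.mono hUS
    have hdOn : DifferentiableOn ℝ (iteratedDerivWithin j g (Set.Ioo (0:ℝ) 1))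
        (Set.Ioo (0:ℝ) 1) :=
      hgU.differentiableOn_iteratedDerivWithin (by exact_mod_cast hj)
        isOpen_Ioo.uniqueDiffOn
    have hnhds : Set.Ioo (0:ℝ) 1 ∈ nhds u := isOpen_Ioo.mem_nhds hu
    have heq : iteratedDeriv j g =ᶠ[nhds u] iteratedDerivWithin j g (Set.Ioo (0:ℝ) 1) :=
      Filter.eventuallyEq_of_mem hnhds fun v hv =>
        (iterWithin_eq_iter (isOpen_Ioo.mem_nhds hv) j).symm
    have hDA : DifferentiableAt ℝ (iteratedDeriv j g) u :=
      ((hdOn u hu).differentiableAt hnhds).congr_of_eventuallyEq heq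
    have h := hDA.hasDerivAt
    rwa [iteratedDeriv_succ]
  have hgc : ContinuousOn g (Set.Ioc (0:ℝ) 1) := hg.continuousOn
  -- monotonicity of g
  have hmono : MonotoneOn g (Set.Ioc (0:ℝ) 1) := by
    apply monotoneOn_of_deriv_nonneg (convex_Ioc 0 1) hgc
    · intro u hu
      rw [interior_Ioc] at hu
      have h := hder 0 (by norm_num) u hu
      rw [iteratedDeriv_zero] at h
      exact h.differentiableAt.differentiableWithinAt
    · intro u hu
      rw [interior_Ioc] at hu
      have h := hder 0 (by norm_num) u hu
      rw [iteratedDeriv_zero] at h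
      rw [h.deriv]
      exact hpos 1 (by norm_num) u hu
  -- interval integrability of s * g s
  have hint : ∀ u ∈ Set.Ioc (0:ℝ) 1, IntervalIntegrable (fun s => s * g s) volume 0 u := by
    intro u hu
    rw [intervalIntegrable_iff_integrableOn_Ioc_of_le hu.1.le]
    have hcont : ContinuousOn (fun s => s * g s) (Set.Ioc (0:ℝ) u) :=
      continuousOn_id.mul (hgc.mono (Set.Ioc_subset_Ioc_right hu.2))
    refine MeasureTheory.Integrable.mono'
      (g := fun _ => u * g u) ?_ (hcont.aestronglyMeasurable measurableSet_Ioc) ?_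
    · exact (integrableOn_const measure_Ioc_lt_top.ne)
    · rw [ae_restrict_iff' measurableSet_Ioc]
      filter_upwards with s hs
      have hsS : s ∈ Set.Ioc (0:ℝ) 1 := ⟨hs.1, hs.2.trans hu.2⟩
      have h1 : 0 ≤ s * g s := mul_nonneg hs.1.le (hg0 s hsS)
      rw [Real.norm_of_nonneg h1]
      exact mul_le_mul hs.2 (hmono hsS hu hs.2) (hg0 s hsS) (hu.1.le)
  -- key integral inequality
  have hGle : ∀ u ∈ Set.Ioc (0:ℝ) 1,
      (∫ s in (0:ℝ)..u, s * g s) ≤ u ^ 2 / 2 * g u := by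
    intro u hu
    have h1 : (∫ s in (0:ℝ)..u, s * g s) ≤ ∫ s in (0:ℝ)..u, s * g u := by
      apply intervalIntegral.integral_mono_on hu.1.le (hint u hu)
        ((continuous_id.mul continuous_const).intervalIntegrable 0 u)
      intro s hs
      rcases eq_or_lt_of_le hs.1 with h0 | h0
      · rw [← h0]; simp
      · exact mul_le_mul_of_nonneg_left
          (hmono ⟨h0, hs.2.trans hu.2⟩ hu hs.2) h0.le
    have h2 : (∫ s in (0:ℝ)..u, s * g u) = u ^ 2 / 2 * g u := by
      rw [intervalIntegral.integral_mul_const, integral_id]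
      ring
    linarith
  have hGpos : ∀ u ∈ Set.Ioc (0:ℝ) 1, 0 ≤ ∫ s in (0:ℝ)..u, s * g s := by
    intro u hu
    apply intervalIntegral.integral_nonneg hu.1.le
    intro s hs
    rcases eq_or_lt_of_le hs.1 with h0 | h0
    · rw [← h0]; simp
    · exact mul_nonneg h0.le (hg0 s ⟨h0, hs.2.trans hu.2⟩)
  -- FTC
  have hGder : ∀ u ∈ Set.Ioo (0:ℝ) 1,
      HasDerivAt (fun v => ∫ s in (0:ℝ)..v, s * g s) (u * g u) u := by
    intro u hu
    have hcont : ContinuousOn (fun s => s * g s) (Set.Ioo (0:ℝ) 1) :=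
      continuousOn_id.mul (hgc.mono hUS)
    exact intervalIntegral.integral_hasDerivAt_right (hint u (hUS hu))
      (hcont.stronglyMeasurableAtFilter isOpen_Ioo u hu)
      (hcont.continuousAt (isOpen_Ioo.mem_nhds hu))
  -- basic facts about x > 1
  have hx0 : ∀ x : ℝ, 1 < x → x ≠ 0 := fun x hx => by positivity
  have hmem : ∀ x : ℝ, 1 < x → x⁻¹ ∈ Set.Ioo (0:ℝ) 1 := by
    intro x hx
    constructor
    · exact inv_pos.2 (by linarith)
    · rw [inv_eq_one_div, div_lt_one (by linarith)]; exact hx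
  have hmemc : ∀ x : ℝ, 1 ≤ x → x⁻¹ ∈ Set.Ioc (0:ℝ) 1 := by
    intro x hx
    constructor
    · exact inv_pos.2 (by linarith)
    · rw [inv_eq_one_div, div_le_one (by linarith)]; exact hx
  -- derivative chains
  have hd0 : ∀ x : ℝ, 1 < x → HasDerivAt (fun y => AA g 3 0 y - CC g 1 y)
      (-2 * AA g 4 0 x - AA g 5 1 x + CC g 2 x) x := by
    intro x hx
    have h1 : HasDerivAt (AA g 3 0) (-(3:ℝ) * AA g 4 0 x - AA g 5 1 x) x := by
      exact_mod_cast AA_hasDerivAt g 3 0 (by norm_num) (hx0 x hx)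
        (hder 0 (by norm_num) _ (hmem x hx))
    have h2 : HasDerivAt (CC g 1) (-(1:ℝ) * CC g 2 x - AA g 4 0 x) x := by
      exact_mod_cast CC_hasDerivAt g 1 (by norm_num) (hx0 x hx) (hGder _ (hmem x hx))
    refine (h1.sub h2).congr_deriv ?_
    ring
  have hd1 : ∀ x : ℝ, 1 < x →
      HasDerivAt (fun y => -2 * AA g 4 0 y - AA g 5 1 y + CC g 2 y)
      (7 * AA g 5 0 x + 7 * AA g 6 1 x + AA g 7 2 x - 2 * CC g 3 x) x := by
    intro x hx
    have h1 : HasDerivAt (AA g 4 0) (-(4:ℝ) * AA g 5 0 x - AA g 6 1 x) x := by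
      exact_mod_cast AA_hasDerivAt g 4 0 (by norm_num) (hx0 x hx)
        (hder 0 (by norm_num) _ (hmem x hx))
    have h2 : HasDerivAt (AA g 5 1) (-(5:ℝ) * AA g 6 1 x - AA g 7 2 x) x := by
      exact_mod_cast AA_hasDerivAt g 5 1 (by norm_num) (hx0 x hx)
        (hder 1 (by norm_num) _ (hmem x hx))
    have h3 : HasDerivAt (CC g 2) (-(2:ℝ) * CC g 3 x - AA g 5 0 x) x := by
      exact_mod_cast CC_hasDerivAt g 2 (by norm_num) (hx0 x hx) (hGder _ (hmem x hx))
    refine (((h1.const_mul (-2:ℝ)).sub h2).add h3).congr_deriv ?_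
    ring
  have hd2 : ∀ x : ℝ, 1 < x →
      HasDerivAt (fun y => 7 * AA g 5 0 y + 7 * AA g 6 1 y + AA g 7 2 y - 2 * CC g 3 y)
      (-33 * AA g 6 0 x - 49 * AA g 7 1 x - 14 * AA g 8 2 x - AA g 9 3 x + 6 * CC g 4 x)
      x := by
    intro x hx
    have h1 : HasDerivAt (AA g 5 0) (-(5:ℝ) * AA g 6 0 x - AA g 7 1 x) x := by
      exact_mod_cast AA_hasDerivAt g 5 0 (by norm_num) (hx0 x hx)
        (hder 0 (by norm_num) _ (hmem x hx))
    have h2 : HasDerivAt (AA g 6 1) (-(6:ℝ) * AA g 7 1 x - AA g 8 2 x) x := by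
      exact_mod_cast AA_hasDerivAt g 6 1 (by norm_num) (hx0 x hx)
        (hder 1 (by norm_num) _ (hmem x hx))
    have h3 : HasDerivAt (AA g 7 2) (-(7:ℝ) * AA g 8 2 x - AA g 9 3 x) x := by
      exact_mod_cast AA_hasDerivAt g 7 2 (by norm_num) (hx0 x hx)
        (hder 2 (by norm_num) _ (hmem x hx))
    have h4 : HasDerivAt (CC g 3) (-(3:ℝ) * CC g 4 x - AA g 6 0 x) x := by
      exact_mod_cast CC_hasDerivAt g 3 (by norm_num) (hx0 x hx) (hGder _ (hmem x hx))
    refine ((((h1.const_mul (7:ℝ)).add (h2.const_mul (7:ℝ))).add h3).sub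
      (h4.const_mul (2:ℝ))).congr_deriv ?_
    ring
  have hd3 : ∀ x : ℝ, 1 < x →
      HasDerivAt (fun y => -33 * AA g 6 0 y - 49 * AA g 7 1 y - 14 * AA g 8 2 y
        - AA g 9 3 y + 6 * CC g 4 y)
      (192 * AA g 7 0 x + 376 * AA g 8 1 x + 161 * AA g 9 2 x + 23 * AA g 10 3 x
        + AA g 11 4 x - 24 * CC g 5 x) x := by
    intro x hx
    have h1 : HasDerivAt (AA g 6 0) (-(6:ℝ) * AA g 7 0 x - AA g 8 1 x) x := by
      exact_mod_cast AA_hasDerivAt g 6 0 (by norm_num) (hx0 x hx)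
        (hder 0 (by norm_num) _ (hmem x hx))
    have h2 : HasDerivAt (AA g 7 1) (-(7:ℝ) * AA g 8 1 x - AA g 9 2 x) x := by
      exact_mod_cast AA_hasDerivAt g 7 1 (by norm_num) (hx0 x hx)
        (hder 1 (by norm_num) _ (hmem x hx))
    have h3 : HasDerivAt (AA g 8 2) (-(8:ℝ) * AA g 9 2 x - AA g 10 3 x) x := by
      exact_mod_cast AA_hasDerivAt g 8 2 (by norm_num) (hx0 x hx)
        (hder 2 (by norm_num) _ (hmem x hx))
    have h4 : HasDerivAt (AA g 9 3) (-(9:ℝ) * AA g 10 3 x - AA g 11 4 x) x := by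
      exact_mod_cast AA_hasDerivAt g 9 3 (by norm_num) (hx0 x hx)
        (hder 3 (by norm_num) _ (hmem x hx))
    have h5 : HasDerivAt (CC g 4) (-(4:ℝ) * CC g 5 x - AA g 7 0 x) x := by
      exact_mod_cast CC_hasDerivAt g 4 (by norm_num) (hx0 x hx) (hGder _ (hmem x hx))
    refine (((((h1.const_mul (-33:ℝ)).sub (h2.const_mul (49:ℝ))).sub
      (h3.const_mul (14:ℝ))).sub h4).add (h5.const_mul (6:ℝ))).congr_deriv ?_
    ring
  -- F agrees with the explicit formula
  have e0 : ∀ x : ℝ, 1 ≤ x → F x = AA g 3 0 x - CC g 1 x := by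
    intro x hx
    rw [hF x hx]
    simp [AA, CC, iteratedDeriv_zero]
  have hnx : ∀ x : ℝ, 1 < x → Set.Ioi (1:ℝ) ∈ nhds x :=
    fun x hx => isOpen_Ioi.mem_nhds hx
  have hF' : ∀ x : ℝ, 1 < x →
      HasDerivAt F (-2 * AA g 4 0 x - AA g 5 1 x + CC g 2 x) x := by
    intro x hx
    exact (hd0 x hx).congr_of_eventuallyEq
      (Filter.eventuallyEq_of_mem (hnx x hx) fun y hy => e0 y (le_of_lt hy))
  have e1 : ∀ x : ℝ, 1 < x →
      iteratedDeriv 1 F x = -2 * AA g 4 0 x - AA g 5 1 x + CC g 2 x := by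
    intro x hx
    rw [iteratedDeriv_one]
    exact (hF' x hx).deriv
  have hF1 : ∀ x : ℝ, 1 < x → HasDerivAt (iteratedDeriv 1 F)
      (7 * AA g 5 0 x + 7 * AA g 6 1 x + AA g 7 2 x - 2 * CC g 3 x) x := by
    intro x hx
    exact (hd1 x hx).congr_of_eventuallyEq
      (Filter.eventuallyEq_of_mem (hnx x hx) fun y hy => e1 y hy)
  have e2 : ∀ x : ℝ, 1 < x → iteratedDeriv 2 F x
      = 7 * AA g 5 0 x + 7 * AA g 6 1 x + AA g 7 2 x - 2 * CC g 3 x := by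
    intro x hx
    show iteratedDeriv (1+1) F x = _
    rw [iteratedDeriv_succ]
    exact (hF1 x hx).deriv
  have hF2 : ∀ x : ℝ, 1 < x → HasDerivAt (iteratedDeriv 2 F)
      (-33 * AA g 6 0 x - 49 * AA g 7 1 x - 14 * AA g 8 2 x - AA g 9 3 x
        + 6 * CC g 4 x) x := by
    intro x hx
    exact (hd2 x hx).congr_of_eventuallyEq
      (Filter.eventuallyEq_of_mem (hnx x hx) fun y hy => e2 y hy)
  have e3 : ∀ x : ℝ, 1 < x → iteratedDeriv 3 F x
      = -33 * AA g 6 0 x - 49 * AA g 7 1 x - 14 * AA g 8 2 x - AA g 9 3 x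
        + 6 * CC g 4 x := by
    intro x hx
    show iteratedDeriv (2+1) F x = _
    rw [iteratedDeriv_succ]
    exact (hF2 x hx).deriv
  have hF3 : ∀ x : ℝ, 1 < x → HasDerivAt (iteratedDeriv 3 F)
      (192 * AA g 7 0 x + 376 * AA g 8 1 x + 161 * AA g 9 2 x + 23 * AA g 10 3 x
        + AA g 11 4 x - 24 * CC g 5 x) x := by
    intro x hx
    exact (hd3 x hx).congr_of_eventuallyEq
      (Filter.eventuallyEq_of_mem (hnx x hx) fun y hy => e3 y hy)
  have e4 : ∀ x : ℝ, 1 < x → iteratedDeriv 4 F x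
      = 192 * AA g 7 0 x + 376 * AA g 8 1 x + 161 * AA g 9 2 x + 23 * AA g 10 3 x
        + AA g 11 4 x - 24 * CC g 5 x := by
    intro x hx
    show iteratedDeriv (3+1) F x = _
    rw [iteratedDeriv_succ]
    exact (hF3 x hx).deriv
  -- sign facts
  have hAnn : ∀ x : ℝ, 1 < x → ∀ k j : ℕ, j ≤ 4 → 0 ≤ AA g k j x := by
    intro x hx k j hj
    exact mul_nonneg (pow_nonneg (inv_nonneg.2 (by linarith)) k)
      (hpos j hj _ (hmem x hx))
  have hCnn : ∀ x : ℝ, 1 < x → ∀ k : ℕ, 0 ≤ CC g k x := by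
    intro x hx k
    exact mul_nonneg (pow_nonneg (inv_nonneg.2 (by linarith)) k)
      (hGpos _ (hUS (hmem x hx)))
  have hCub : ∀ x : ℝ, 1 ≤ x → ∀ k : ℕ, CC g k x ≤ 1/2 * AA g (k+2) 0 x := by
    intro x hx k
    unfold CC AA
    rw [iteratedDeriv_zero]
    have hinv : (0:ℝ) ≤ x⁻¹ := inv_nonneg.2 (by linarith)
    calc x⁻¹ ^ k * ∫ s in (0:ℝ)..x⁻¹, s * g s
        ≤ x⁻¹ ^ k * (x⁻¹ ^ 2 / 2 * g x⁻¹) :=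
          mul_le_mul_of_nonneg_left (hGle _ (hmemc x hx)) (pow_nonneg hinv k)
      _ = 1/2 * (x⁻¹ ^ (k+2) * g x⁻¹) := by rw [pow_add]; ring
  refine ⟨?_, ?_, ?_⟩
  · -- differentiability
    intro n hn x hx
    interval_cases n
    · rw [iteratedDeriv_zero]
      exact (hF' x hx).differentiableAt
    · exact (hF1 x hx).differentiableAt
    · exact (hF2 x hx).differentiableAt
    · exact (hF3 x hx).differentiableAt
  · -- nonnegativity of F on [1,∞)
    intro x hx
    rw [e0 x hx]
    have h1 : CC g 1 x ≤ 1/2 * AA g 3 0 x := hCub x hx 1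
    have h2 : 0 ≤ AA g 3 0 x := by
      unfold AA
      rw [iteratedDeriv_zero]
      exact mul_nonneg (pow_nonneg (inv_nonneg.2 (by linarith)) 3)
        (hg0 _ (hmemc x hx))
    linarith
  · -- alternating signs
    intro n hn1 hn4 x hx
    interval_cases n
    · rw [e1 x hx]
      have h1 : CC g 2 x ≤ 1/2 * AA g 4 0 x := hCub x hx.le 2
      have h2 := hAnn x hx 4 0 (by norm_num)
      have h3 := hAnn x hx 5 1 (by norm_num)
      norm_num
      linarith
    · rw [e2 x hx]
      have h1 : CC g 3 x ≤ 1/2 * AA g 5 0 x := hCub x hx.le 3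
      have h2 := hAnn x hx 5 0 (by norm_num)
      have h3 := hAnn x hx 6 1 (by norm_num)
      have h4 := hAnn x hx 7 2 (by norm_num)
      norm_num
      linarith
    · rw [e3 x hx]
      have h1 : CC g 4 x ≤ 1/2 * AA g 6 0 x := hCub x hx.le 4
      have h2 := hAnn x hx 6 0 (by norm_num)
      have h3 := hAnn x hx 7 1 (by norm_num)
      have h4 := hAnn x hx 8 2 (by norm_num)
      have h5 := hAnn x hx 9 3 (by norm_num)
      norm_num
      linarith
    · rw [e4 x hx]
      have h1 : CC g 5 x ≤ 1/2 * AA g 7 0 x := hCub x hx.le 5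
      have h2 := hAnn x hx 7 0 (by norm_num)
      have h3 := hAnn x hx 8 1 (by norm_num)
      have h4 := hAnn x hx 9 2 (by norm_num)
      have h5 := hAnn x hx 10 3 (by norm_num)
      have h6 := hAnn x hx 11 4 (by norm_num)
      norm_num
      linarith
end
end

section
/- There is an absolute constant C > 0 such that the following holds: if P : (1,∞) → ℝ is four times differentiable with P(x) > 0, P'(x) < 0, P''(x) > 0, P'''(x) < 0 and P''''(x) > 0 for all x > 1, then for every n ∈ {1, 2, 3, 4} and every x > 1, (x−1)ⁿ · |P⁽ⁿ⁻¹⁾(x)| ≤ C · (x−1) · P((x−1)/2 + 1). (Here P⁽⁰⁾ = P.) -/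
noncomputable section

open Set

/-- If `g` is differentiable on `(1,∞)` with increasing derivative (second
derivative positive), then `-g'(x) ≤ (g(x-δ) - g(x))/δ`. -/
lemma key_pos (g : ℝ → ℝ)
    (hd1 : ∀ y : ℝ, 1 < y → DifferentiableAt ℝ g y)
    (hd2 : ∀ y : ℝ, 1 < y → DifferentiableAt ℝ (deriv g) y)
    (h2 : ∀ y : ℝ, 1 < y → 0 < deriv (deriv g) y)
    {x δ : ℝ} (hδ : 0 < δ) (hx : 1 < x - δ) :
    -deriv g x * δ ≤ g (x - δ) - g x := by
  have hxx : x - δ < x := by linarith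
  have hx1 : 1 < x := by linarith
  have mono : StrictMonoOn (deriv g) (Set.Ioi 1) :=
    strictMonoOn_of_deriv_pos (convex_Ioi 1)
      (fun y hy => (hd2 y hy).continuousAt.continuousWithinAt)
      (by rw [interior_Ioi]; exact fun y hy => h2 y hy)
  obtain ⟨c, hc, hceq⟩ := exists_deriv_eq_slope g hxx
    (fun y hy => (hd1 y (lt_of_lt_of_le hx hy.1)).continuousAt.continuousWithinAt)
    (fun y hy => (hd1 y (lt_trans hx hy.1)).differentiableWithinAt)
  have hc1 : (1 : ℝ) < c := lt_trans hx hc.1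
  have hle : deriv g c ≤ deriv g x := (mono hc1 hx1 hc.2).le
  have heq : deriv g c * δ = g x - g (x - δ) := by
    have hne : x - (x - δ) = δ := by ring
    rw [hceq, hne, div_mul_cancel₀]
    exact ne_of_gt hδ
  nlinarith [mul_le_mul_of_nonneg_right hle hδ.le]

/-- If `g` is differentiable on `(1,∞)` with decreasing derivative (second
derivative negative), then `g'(x)·δ ≤ g(x) - g(x-δ)`. -/
lemma key_neg (g : ℝ → ℝ)
    (hd1 : ∀ y : ℝ, 1 < y → DifferentiableAt ℝ g y)
    (hd2 : ∀ y : ℝ, 1 < y → DifferentiableAt ℝ (deriv g) y)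
    (h2 : ∀ y : ℝ, 1 < y → deriv (deriv g) y < 0)
    {x δ : ℝ} (hδ : 0 < δ) (hx : 1 < x - δ) :
    deriv g x * δ ≤ g x - g (x - δ) := by
  have hxx : x - δ < x := by linarith
  have hx1 : 1 < x := by linarith
  have anti : StrictAntiOn (deriv g) (Set.Ioi 1) :=
    strictAntiOn_of_deriv_neg (convex_Ioi 1)
      (fun y hy => (hd2 y hy).continuousAt.continuousWithinAt)
      (by rw [interior_Ioi]; exact fun y hy => h2 y hy)
  obtain ⟨c, hc, hceq⟩ := exists_deriv_eq_slope g hxx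
    (fun y hy => (hd1 y (lt_of_lt_of_le hx hy.1)).continuousAt.continuousWithinAt)
    (fun y hy => (hd1 y (lt_trans hx hy.1)).differentiableWithinAt)
  have hc1 : (1 : ℝ) < c := lt_trans hx hc.1
  have hle : deriv g x ≤ deriv g c := (anti hc1 hx1 hc.2).le
  have heq : deriv g c * δ = g x - g (x - δ) := by
    have hne : x - (x - δ) = δ := by ring
    rw [hceq, hne, div_mul_cancel₀]
    exact ne_of_gt hδ
  nlinarith [mul_le_mul_of_nonneg_right hle hδ.le]

/-- An absolute constant bounds (x−1)ⁿ·|P⁽ⁿ⁻¹⁾(x)| by (x−1)·P((x−1)/2 + 1), for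
any four times differentiable P on (1,∞) whose first four derivatives alternate
in sign (P > 0, P' < 0, P'' > 0, P''' < 0, P'''' > 0). -/
theorem derivative_decay_bound :
    ∃ C : ℝ, 0 < C ∧ ∀ P : ℝ → ℝ,
      (∀ n : ℕ, n < 4 → ∀ x : ℝ, 1 < x → DifferentiableAt ℝ (iteratedDeriv n P) x) →
      (∀ x : ℝ, 1 < x → 0 < P x) →
      (∀ x : ℝ, 1 < x → iteratedDeriv 1 P x < 0) →
      (∀ x : ℝ, 1 < x → 0 < iteratedDeriv 2 P x) →
      (∀ x : ℝ, 1 < x → iteratedDeriv 3 P x < 0) →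
      (∀ x : ℝ, 1 < x → 0 < iteratedDeriv 4 P x) →
      ∀ n : ℕ, 1 ≤ n → n ≤ 4 → ∀ x : ℝ, 1 < x →
        (x - 1) ^ n * |iteratedDeriv (n - 1) P x| ≤
          C * (x - 1) * P ((x - 1) / 2 + 1) := by
  refine ⟨216, by norm_num, ?_⟩
  intro P hd hP0 hP1 hP2 hP3 hP4 n hn1 hn4 x hx
  have e1 : iteratedDeriv 1 P = deriv P := iteratedDeriv_one
  have e2 : iteratedDeriv 2 P = deriv (deriv P) := by
    rw [show (2:ℕ) = 1 + 1 from rfl, iteratedDeriv_succ, e1]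
  have e3 : iteratedDeriv 3 P = deriv (deriv (deriv P)) := by
    rw [show (3:ℕ) = 2 + 1 from rfl, iteratedDeriv_succ, e2]
  have e4 : iteratedDeriv 4 P = deriv (deriv (deriv (deriv P))) := by
    rw [show (4:ℕ) = 3 + 1 from rfl, iteratedDeriv_succ, e3]
  have d0 : ∀ y : ℝ, 1 < y → DifferentiableAt ℝ P y := by
    intro y hy; have := hd 0 (by norm_num) y hy; rwa [iteratedDeriv_zero] at this
  have d1 : ∀ y : ℝ, 1 < y → DifferentiableAt ℝ (deriv P) y := by
    intro y hy; have := hd 1 (by norm_num) y hy; rwa [e1] at this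
  have d2 : ∀ y : ℝ, 1 < y → DifferentiableAt ℝ (deriv (deriv P)) y := by
    intro y hy; have := hd 2 (by norm_num) y hy; rwa [e2] at this
  have d3 : ∀ y : ℝ, 1 < y → DifferentiableAt ℝ (deriv (deriv (deriv P))) y := by
    intro y hy; have := hd 3 (by norm_num) y hy; rwa [e3] at this
  have s1 : ∀ y : ℝ, 1 < y → deriv P y < 0 := fun y hy => e1 ▸ hP1 y hy
  have s2 : ∀ y : ℝ, 1 < y → 0 < deriv (deriv P) y := fun y hy => e2 ▸ hP2 y hy
  have s3 : ∀ y : ℝ, 1 < y → deriv (deriv (deriv P)) y < 0 := fun y hy => e3 ▸ hP3 y hy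
  have s4 : ∀ y : ℝ, 1 < y → 0 < deriv (deriv (deriv (deriv P))) y := fun y hy => e4 ▸ hP4 y hy
  set h : ℝ := (x - 1) / 2 with hh
  have hhpos : 0 < h := by rw [hh]; linarith
  set m : ℝ := (x - 1) / 2 + 1 with hm
  have hm1 : 1 < m := by rw [hm]; linarith
  have hmx : m = x - h := by rw [hm, hh]; ring
  have hPm : 0 < P m := hP0 m hm1
  have hx1 : x - 1 = 2 * h := by rw [hh]; ring
  have hxm : 1 < x - h := by rw [← hmx]; exact hm1
  interval_cases n
  · -- n = 1
    simp only [show (1:ℕ) - 1 = 0 from rfl, iteratedDeriv_zero, pow_one]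
    have hPx : 0 < P x := hP0 x hx
    rw [abs_of_pos hPx]
    have anti : StrictAntiOn P (Set.Ioi 1) :=
      strictAntiOn_of_deriv_neg (convex_Ioi 1)
        (fun y hy => (d0 y hy).continuousAt.continuousWithinAt)
        (by rw [interior_Ioi]; exact fun y hy => s1 y hy)
    have hlt : P x ≤ P m := (anti hm1 (Set.mem_Ioi.mpr hx) (by rw [hmx]; linarith)).le
    nlinarith [hPm, hhpos]
  · -- n = 2
    simp only [show (2:ℕ) - 1 = 1 from rfl, e1]
    rw [abs_of_neg (s1 x hx), hx1]
    have hb := key_pos P d0 d1 s2 hhpos hxm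
    rw [← hmx] at hb
    have hPx : 0 < P x := hP0 x hx
    have hc : -deriv P x * h ≤ P m := by linarith
    have hfin := mul_le_mul_of_nonneg_left hc (show (0:ℝ) ≤ 4 * h by positivity)
    have hPm' : 0 ≤ h * P m := by positivity
    linarith
  · -- n = 3
    simp only [show (3:ℕ) - 1 = 2 from rfl, e2]
    rw [abs_of_pos (s2 x hx), hx1]
    have hδ : 0 < h / 2 := by linarith
    have hstep1 : 1 < x - h / 2 := by linarith
    have hstep2 : 1 < (x - h / 2) - h / 2 := by
      have : (x - h / 2) - h / 2 = x - h := by ring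
      rw [this]; exact hxm
    have k1 := key_neg (deriv P) d1 d2 s3 hδ hstep1
    have k2 := key_pos P d0 d1 s2 hδ hstep2
    have e' : (x - h / 2) - h / 2 = m := by rw [hmx]; ring
    rw [e'] at k2
    have hP'x : deriv P x < 0 := s1 x hx
    have hPx2 : 0 < P (x - h / 2) := hP0 _ (by linarith)
    have c1 : deriv (deriv P) x * (h / 2) ≤ -deriv P (x - h / 2) := by linarith
    have c2 : -deriv P (x - h / 2) * (h / 2) ≤ P m := by linarith
    have c3 : deriv (deriv P) x * (h / 2) * (h / 2) ≤ P m := by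
      linarith [mul_le_mul_of_nonneg_right c1 hδ.le, c2]
    have hfin := mul_le_mul_of_nonneg_left c3 (show (0:ℝ) ≤ 32 * h by positivity)
    have hPm' : 0 ≤ h * P m := by positivity
    linarith
  · -- n = 4
    simp only [show (4:ℕ) - 1 = 3 from rfl, e3]
    rw [abs_of_neg (s3 x hx), hx1]
    have hδ : 0 < h / 3 := by linarith
    have hstep1 : 1 < x - h / 3 := by linarith
    have hstep2 : 1 < (x - h / 3) - h / 3 := by
      have : (x - h / 3) - h / 3 = x - 2 * h / 3 := by ring
      rw [this]; linarith
    have hstep3 : 1 < (x - 2 * h / 3) - h / 3 := by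
      have : (x - 2 * h / 3) - h / 3 = x - h := by ring
      rw [this]; exact hxm
    have k1 := key_pos (deriv (deriv P)) d2 d3 s4 hδ hstep1
    have k2 := key_neg (deriv P) d1 d2 s3 hδ hstep2
    have e2' : (x - h / 3) - h / 3 = x - 2 * h / 3 := by ring
    rw [e2'] at k2
    have k3 := key_pos P d0 d1 s2 hδ hstep3
    have e3' : (x - 2 * h / 3) - h / 3 = m := by rw [hmx]; ring
    rw [e3'] at k3
    have hP''x : 0 < deriv (deriv P) x := s2 x hx
    have hP'1 : deriv P (x - h / 3) < 0 := s1 _ hstep1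
    have hPxm : 0 < P (x - 2 * h / 3) := hP0 _ (by linarith)
    have c1 : -deriv (deriv (deriv P)) x * (h / 3) ≤ deriv (deriv P) (x - h / 3) := by
      linarith
    have c2 : deriv (deriv P) (x - h / 3) * (h / 3) ≤ -deriv P (x - 2 * h / 3) := by
      linarith
    have c3 : -deriv P (x - 2 * h / 3) * (h / 3) ≤ P m := by linarith
    have c4 : -deriv (deriv (deriv P)) x * (h / 3) * (h / 3) ≤ -deriv P (x - 2 * h / 3) := by
      linarith [mul_le_mul_of_nonneg_right c1 hδ.le, c2]
    have c5 : -deriv (deriv (deriv P)) x * (h / 3) * (h / 3) * (h / 3) ≤ P m := by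
      linarith [mul_le_mul_of_nonneg_right c4 hδ.le, c3]
    linarith [mul_le_mul_of_nonneg_left c5 (by positivity : (0:ℝ) ≤ 432 * h)]
end
end

section
/- Fix ε ∈ (0,1). Let P : [1,∞) → ℝ be continuous, strictly positive, and strictly decreasing, and suppose P satisfies the reflection equation for ε. Then for every x ∈ [1, 2+ε], ∫₀^{1/x} s·P(2 + ε − s) ds < 1/(2x²). -/
noncomputable section

/-- `P` satisfies the reflection equation for `ε`: for every x ≥ 1,
(1/x³)·P(2 + ε − 1/x) − (1/x)·∫₀^{1/x} s·P(2 + ε − s) ds + 1/(2x³) = P(x). -/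
def SatisfiesReflectionEq (ε : ℝ) (P : ℝ → ℝ) : Prop :=
  ∀ x : ℝ, 1 ≤ x →
    (1 / x ^ 3) * P (2 + ε - 1 / x)
      - (1 / x) * (∫ s in (0:ℝ)..(1 / x), s * P (2 + ε - s))
      + 1 / (2 * x ^ 3) = P x

/-- The integral bound: ∫₀^{1/x} s·P(2 + ε − s) ds < 1/(2x²) for x ∈ [1, 2+ε]. -/
theorem integral_bound (ε : ℝ) (hε0 : 0 < ε) (hε1 : ε < 1) (P : ℝ → ℝ)
    (hcont : ContinuousOn P (Set.Ici (1:ℝ)))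
    (hpos : ∀ x : ℝ, 1 ≤ x → 0 < P x)
    (hanti : StrictAntiOn P (Set.Ici (1:ℝ)))
    (hrefl : SatisfiesReflectionEq ε P) :
    ∀ x : ℝ, 1 ≤ x → x ≤ 2 + ε →
      (∫ s in (0:ℝ)..(1 / x), s * P (2 + ε - s)) < 1 / (2 * x ^ 2) := by
  intro x hx1 _
  have hx0 : (0:ℝ) < x := lt_of_lt_of_le one_pos hx1
  have hxne : x ≠ 0 := ne_of_gt hx0
  -- continuity of the rescaled integrands
  have hct : ∀ c : ℝ, 1 ≤ c →
      ContinuousOn (fun t : ℝ => t * P (2 + ε - t / c)) (Set.Icc (0:ℝ) 1) := by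
    intro c hc
    have hc0 : (0:ℝ) < c := lt_of_lt_of_le one_pos hc
    apply ContinuousOn.mul continuousOn_id
    apply hcont.comp ((continuous_const.sub (continuous_id.div_const c)).continuousOn)
    intro t ht
    have h1 : t / c ≤ 1 := by
      rw [div_le_one hc0]; linarith [ht.2]
    simp only [Set.mem_Ici, id_eq, Pi.sub_apply]
    linarith
  -- substitution s = t / x
  have hsub : ∫ t in (0:ℝ)..1, t * P (2 + ε - t / x)
      = x ^ 2 * ∫ s in (0:ℝ)..(1 / x), s * P (2 + ε - s) := by
    have hkey : ∫ t in (0:ℝ)..1, (fun s => s * P (2 + ε - s)) (t / x)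
        = x • ∫ s in (0:ℝ)..(1 / x), s * P (2 + ε - s) := by
      rw [intervalIntegral.integral_comp_div (fun s => s * P (2 + ε - s)) hxne]
      norm_num
    have heq : ∀ t : ℝ, t * P (2 + ε - t / x)
        = x * ((fun s => s * P (2 + ε - s)) (t / x)) := by
      intro t
      simp only
      field_simp
    simp_rw [heq]
    rw [intervalIntegral.integral_const_mul, hkey, smul_eq_mul]
    ring
  -- comparison: the rescaled integrand is pointwise below the x = 1 one
  have hmono : ∫ t in (0:ℝ)..1, t * P (2 + ε - t / x)
      ≤ ∫ t in (0:ℝ)..1, t * P (2 + ε - t / 1) := by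
    apply intervalIntegral.integral_mono_on (by norm_num)
    · exact ((hct x hx1).mono (by rw [Set.uIcc_of_le (by norm_num : (0:ℝ) ≤ 1)])).intervalIntegrable
    · exact ((hct 1 le_rfl).mono (by rw [Set.uIcc_of_le (by norm_num : (0:ℝ) ≤ 1)])).intervalIntegrable
    · intro t ht
      apply mul_le_mul_of_nonneg_left _ ht.1
      have hdiv : t / x ≤ t / 1 := by
        rw [div_one]; exact div_le_self ht.1 hx1
      have ha : (2 + ε - t / 1) ∈ Set.Ici (1:ℝ) := by
        simp only [Set.mem_Ici, div_one]; linarith [ht.2]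
      have hb : (2 + ε - t / x) ∈ Set.Ici (1:ℝ) := by
        have : t / x ≤ t := by simpa using hdiv
        simp only [Set.mem_Ici]; linarith [ht.2]
      exact hanti.antitoneOn ha hb (by linarith)
  -- the case x = 1 of the reflection equation gives the strict bound
  have hone : ∫ s in (0:ℝ)..(1:ℝ), s * P (2 + ε - s) < 1 / 2 := by
    have h := hrefl 1 le_rfl
    norm_num at h
    have hPlt : P (2 + ε - 1) < P 1 := by
      apply hanti (Set.mem_Ici.2 le_rfl) (Set.mem_Ici.2 (by linarith)) (by linarith)
    linarith
  -- combine
  have hJ : ∫ t in (0:ℝ)..1, t * P (2 + ε - t / 1)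
      = ∫ s in (0:ℝ)..(1:ℝ), s * P (2 + ε - s) := by
    simp [div_one]
  have hfinal : x ^ 2 * (∫ s in (0:ℝ)..(1 / x), s * P (2 + ε - s)) < 1 / 2 := by
    rw [← hsub]
    calc ∫ t in (0:ℝ)..1, t * P (2 + ε - t / x)
        ≤ ∫ t in (0:ℝ)..1, t * P (2 + ε - t / 1) := hmono
      _ = ∫ s in (0:ℝ)..(1:ℝ), s * P (2 + ε - s) := hJ
      _ < 1 / 2 := hone
  rw [lt_div_iff₀ (by positivity : (0:ℝ) < 2 * x ^ 2)]
  nlinarith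
end
end

section
/- Fix ε ∈ (0, 1/8]. Let P : [1,∞) → ℝ be continuous, strictly positive, and strictly decreasing, and suppose P satisfies the reflection equation for ε. Then ∫_ε^{1/2} P(1+s) ds ≤ 1, and moreover ∫_ε^{1} P(1+s) ds ≤ 3. -/
noncomputable section

/-- Integral bounds for P near the sphere: ∫_ε^{1/2} P(1+s) ds ≤ 1 and
∫_ε^{1} P(1+s) ds ≤ 3. -/
theorem integral_P_bounded (ε : ℝ) (hε0 : 0 < ε) (hε1 : ε ≤ 1/8) (P : ℝ → ℝ)
    (hcont : ContinuousOn P (Set.Ici (1:ℝ)))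
    (hpos : ∀ x : ℝ, 1 ≤ x → 0 < P x)
    (hanti : StrictAntiOn P (Set.Ici (1:ℝ)))
    (hrefl : SatisfiesReflectionEq ε P) :
    (∫ s in ε..(1/2 : ℝ), P (1 + s)) ≤ 1 ∧ (∫ s in ε..(1 : ℝ), P (1 + s)) ≤ 3 := by
  have hInt : ∀ a b : ℝ, 1 ≤ a → 1 ≤ b → IntervalIntegrable P MeasureTheory.volume a b := by
    intro a b ha hb
    apply ContinuousOn.intervalIntegrable
    apply hcont.mono
    intro x hx
    rw [Set.mem_uIcc] at hx
    rcases hx with h | h <;> simp only [Set.mem_Ici] <;> linarith [h.1]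
  have hIntW : ∀ a b : ℝ, 1 ≤ a → 1 ≤ b →
      IntervalIntegrable (fun u => (2 + ε - u) * P u) MeasureTheory.volume a b := by
    intro a b ha hb
    apply ContinuousOn.intervalIntegrable
    apply ContinuousOn.mul
    · exact (continuous_const.sub continuous_id).continuousOn
    · apply hcont.mono
      intro x hx
      rw [Set.mem_uIcc] at hx
      rcases hx with h | h <;> simp only [Set.mem_Ici] <;> linarith [h.1]
  -- step 1: reflection equation at x = 1
  have hrefl1 := hrefl 1 le_rfl
  norm_num at hrefl1
  -- hrefl1 : P (2 + ε - 1) - ∫ s in 0..1, s * P (2+ε−s) + 1/2 = P 1 (check form)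
  have hP1 : P (1 + ε) < P 1 := by
    have := hanti (Set.mem_Ici.2 (by linarith : (1:ℝ) ≤ 1)) (Set.mem_Ici.2 (by linarith : (1:ℝ) ≤ 1 + ε)) (by linarith)
    exact this
  have key : (∫ s in (0:ℝ)..1, s * P (2 + ε - s)) ≤ 1/2 := by
    rw [show (2:ℝ) + ε - 1 = 1 + ε by ring] at hrefl1
    linarith
  -- substitution
  have hsub : (∫ s in (0:ℝ)..1, s * P (2 + ε - s))
      = ∫ u in (1+ε)..(2+ε), (2 + ε - u) * P u := by
    have h := intervalIntegral.integral_comp_sub_left (a := (0:ℝ)) (b := 1)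
      (fun u => (2 + ε - u) * P u) (2 + ε)
    simp only [sub_sub_cancel, sub_zero] at h
    rw [h, show (2:ℝ) + ε - 1 = 1 + ε by ring]
  rw [hsub] at key
  have hε' : (1:ℝ) ≤ 1 + ε := by linarith
  have hε'' : (1:ℝ) ≤ 3/2 + ε := by linarith
  have hPnn : ∀ u : ℝ, 1 ≤ u → 0 ≤ P u := fun u hu => (hpos u hu).le
  -- ∫_{1+ε}^{3/2+ε} P ≤ 1
  have hmid : (∫ u in (1+ε)..(3/2+ε), P u) ≤ 1 := by
    have h1 : (∫ u in (1+ε)..(3/2+ε), (1/2 : ℝ) * P u)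
        ≤ ∫ u in (1+ε)..(3/2+ε), (2 + ε - u) * P u := by
      apply intervalIntegral.integral_mono_on (by linarith)
      · exact (hInt _ _ hε' hε'').const_mul _
      · exact hIntW _ _ hε' hε''
      · intro u hu
        have h1u : (1:ℝ) ≤ u := by linarith [hu.1]
        have := hPnn u h1u
        have hw : (1/2 : ℝ) ≤ 2 + ε - u := by linarith [hu.2]
        exact mul_le_mul_of_nonneg_right hw this
    have h2 : (∫ u in (1+ε)..(3/2+ε), (2 + ε - u) * P u)
        ≤ ∫ u in (1+ε)..(2+ε), (2 + ε - u) * P u := by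
      rw [← intervalIntegral.integral_add_adjacent_intervals
        (hIntW (1+ε) (3/2+ε) hε' hε'') (hIntW (3/2+ε) (2+ε) hε'' (by linarith))]
      have h3 : (0:ℝ) ≤ ∫ u in (3/2+ε)..(2+ε), (2 + ε - u) * P u := by
        apply intervalIntegral.integral_nonneg (by linarith)
        intro u hu
        have h1u : (1:ℝ) ≤ u := by linarith [hu.1]
        exact mul_nonneg (by linarith [hu.2]) (hPnn u h1u)
      linarith
    rw [intervalIntegral.integral_const_mul] at h1
    linarith
  have hA : (∫ u in (1+ε)..(3/2:ℝ), P u) ≤ 1 := by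
    have hsplit := intervalIntegral.integral_add_adjacent_intervals
      (hInt (1+ε) (3/2) hε' (by norm_num)) (hInt (3/2) (3/2+ε) (by norm_num) hε'')
    have htail : (0:ℝ) ≤ ∫ u in (3/2:ℝ)..(3/2+ε), P u := by
      apply intervalIntegral.integral_nonneg (by linarith)
      intro u hu; exact hPnn u (by linarith [hu.1])
    linarith [hmid, hsplit]
  have hεlt : ε < 3/2 := by linarith
  -- rewrite the goals
  have hshift1 : (∫ s in ε..(1/2:ℝ), P (1 + s)) = ∫ u in (1+ε)..(3/2:ℝ), P u := by
    rw [intervalIntegral.integral_comp_add_left P 1]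
    norm_num
  have hshift2 : (∫ s in ε..(1:ℝ), P (1 + s)) = ∫ u in (1+ε)..(2:ℝ), P u := by
    rw [intervalIntegral.integral_comp_add_left P 1]
    norm_num
  constructor
  · rw [hshift1]; exact hA
  · rw [hshift2]
    -- P (3/2) ≤ 8/3
    have hP32nn : 0 ≤ P (3/2) := hPnn _ (by norm_num)
    have hlow : (1/2 - ε) * P (3/2) ≤ ∫ u in (1+ε)..(3/2:ℝ), P u := by
      have : (∫ u in (1+ε)..(3/2:ℝ), (fun _ => P (3/2)) u) ≤ ∫ u in (1+ε)..(3/2:ℝ), P u := by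
        apply intervalIntegral.integral_mono_on (by linarith)
        · exact intervalIntegrable_const
        · exact hInt _ _ hε' (by norm_num)
        · intro u hu
          rcases eq_or_lt_of_le hu.2 with h | h
          · rw [h]
          · exact (hanti (Set.mem_Ici.2 (by linarith [hu.1])) (Set.mem_Ici.2 (by norm_num)) h).le
      rw [intervalIntegral.integral_const, smul_eq_mul] at this
      calc (1/2 - ε) * P (3/2) = (3/2 - (1+ε)) * P (3/2) := by ring
        _ ≤ _ := this
    have hP32 : P (3/2) ≤ 8/3 := by nlinarith
    have hB : (∫ u in (3/2:ℝ)..(2:ℝ), P u) ≤ (1/2) * P (3/2) := by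
      have : (∫ u in (3/2:ℝ)..(2:ℝ), P u) ≤ ∫ u in (3/2:ℝ)..(2:ℝ), (fun _ => P (3/2)) u := by
        apply intervalIntegral.integral_mono_on (by norm_num)
        · exact hInt _ _ (by norm_num) (by norm_num)
        · exact intervalIntegrable_const
        · intro u hu
          rcases eq_or_lt_of_le hu.1 with h | h
          · rw [← h]
          · exact (hanti (Set.mem_Ici.2 (by norm_num)) (Set.mem_Ici.2 (by linarith [hu.1])) h).le
      rw [intervalIntegral.integral_const, smul_eq_mul] at this
      linarith
    have hsplit := intervalIntegral.integral_add_adjacent_intervals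
      (hInt (1+ε) (3/2) hε' (by norm_num)) (hInt (3/2) 2 (by norm_num) (by norm_num))
    linarith
end
end

section
/- Fix ε ∈ (0, 1/400). Let P : [1,∞) → ℝ be differentiable, strictly positive, strictly decreasing, with P' nondecreasing on [1,∞), and suppose P satisfies the reflection equation for ε. Then for every γ with 2 < γ < 1/(10·√ε): 3γ√ε · P(1 + γ√ε − γ²ε) + ((γ² − 1)ε − γ³ε^{3/2}) · P'(1 + γ√ε) > 0. -/
set_option maxHeartbeats 1600000

noncomputable section

private lemma polyfact (s t : ℝ) (hs0 : 0 < s) (hs20 : 20*s < 1) (hst : 2*s < t) (ht10 : 10*t < 1) :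
    (1+t)*((1+t)^2-(1+s)^2)*(2*(1+t)^3-1)*(t^2-s^2-4*t^3)
      < ((t^2-s^2-4*t^3)*(1+t) + 3*t*(t^2-s^2-s^2*t)) * (2*(1+t)^2*((1+s)^3-1)+(1+t)^2+(1+s)^2)
        - 2*(t^2-s^2-4*t^3)*(1+s)^2*((1+t)*(1+t)^3) := by
  have ht0 : 0 < t := lt_trans (by linarith) hst
  have hs3 : (0:ℝ) < s^3 := by positivity
  have ht2 : t^2 ≤ t/10 := by nlinarith
  have ht3 : t^3 ≤ t/100 := by nlinarith
  have ht4 : t^4 ≤ t/1000 := by nlinarith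
  have ht5 : t^5 ≤ t/10000 := by nlinarith
  have ht6 : t^6 ≤ t/100000 := by nlinarith
  have hts : 4*s^2 < t^2 := by nlinarith
  have hkey : 42*t+76*t^2+56*t^3+24*t^4+16*t^5+8*t^6
      + s*(6+39*t+75*t^2+60*t^3+18*t^4) + s^2*(2+12*t+24*t^2+20*t^3+6*t^4) ≤ 18 := by
    nlinarith [mul_pos hs0 hs0, mul_pos hs0 ht0,
      mul_le_mul_of_nonneg_left ht2 hs0.le, mul_le_mul_of_nonneg_left ht3 hs0.le,
      mul_le_mul_of_nonneg_left ht4 hs0.le,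
      mul_le_mul_of_nonneg_left ht2 (mul_nonneg hs0.le hs0.le),
      mul_le_mul_of_nonneg_left ht3 (mul_nonneg hs0.le hs0.le),
      mul_le_mul_of_nonneg_left ht4 (mul_nonneg hs0.le hs0.le)]
  have hG1 : 0 < 6*s*t^2 + 18*s*t^3
      - (6*s^3+42*s^3*t+76*s^3*t^2+56*s^3*t^3+24*s^3*t^4+16*s^3*t^5+8*s^3*t^6)
      - (6*s^4+39*s^4*t+75*s^4*t^2+60*s^4*t^3+18*s^4*t^4)
      - (2*s^5+12*s^5*t+24*s^5*t^2+20*s^5*t^3+6*s^5*t^4) := by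
    nlinarith [mul_le_mul_of_nonneg_left hkey hs3.le, mul_pos (mul_pos hs0 ht0) (mul_pos ht0 ht0),
      mul_lt_mul_of_pos_left hts (mul_pos hs0 (by linarith : (0:ℝ) < 3/2))]
  have hG2 : 0 ≤ 61*t^5 - 18*s*t^4 - 48*s*t^5 - 24*s*t^6 := by
    nlinarith [mul_nonneg (sub_pos.mpr hst).le (pow_pos ht0 4).le,
      mul_nonneg (sub_pos.mpr hst).le (pow_pos ht0 5).le,
      mul_nonneg (sub_pos.mpr hst).le (pow_pos ht0 6).le,
      mul_le_mul_of_nonneg_left ht2 (pow_pos ht0 4).le, mul_pos (pow_pos ht0 4) ht0]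
  have hG3 : 0 ≤ 108*t^7 - 36*s^2*t^5 - 22*s^2*t^6 := by
    nlinarith [mul_nonneg (sub_pos.mpr hts).le (pow_pos ht0 5).le,
      mul_nonneg (sub_pos.mpr hts).le (pow_pos ht0 6).le,
      mul_pos (pow_pos ht0 5) (pow_pos ht0 2)]
  have hG4 : (0:ℝ) ≤ 6*t^4 + 122*t^6 + 46*t^8 + 8*t^9 + 18*s^2*t^2 + 44*s^2*t^3 + 9*s^2*t^4 := by positivity
  have hring : ((t^2-s^2-4*t^3)*(1+t) + 3*t*(t^2-s^2-s^2*t)) * (2*(1+t)^2*((1+s)^3-1)+(1+t)^2+(1+s)^2)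
        - 2*(t^2-s^2-4*t^3)*(1+s)^2*((1+t)*(1+t)^3)
        - (1+t)*((1+t)^2-(1+s)^2)*(2*(1+t)^3-1)*(t^2-s^2-4*t^3)
      = (6*s*t^2 + 18*s*t^3
      - (6*s^3+42*s^3*t+76*s^3*t^2+56*s^3*t^3+24*s^3*t^4+16*s^3*t^5+8*s^3*t^6)
      - (6*s^4+39*s^4*t+75*s^4*t^2+60*s^4*t^3+18*s^4*t^4)
      - (2*s^5+12*s^5*t+24*s^5*t^2+20*s^5*t^3+6*s^5*t^4))
      + (61*t^5 - 18*s*t^4 - 48*s*t^5 - 24*s*t^6)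
      + (108*t^7 - 36*s^2*t^5 - 22*s^2*t^6)
      + (6*t^4 + 122*t^6 + 46*t^8 + 8*t^9 + 18*s^2*t^2 + 44*s^2*t^3 + 9*s^2*t^4) := by ring
  linarith [hG1, hG2, hG3, hG4, hring.ge, hring.le]

private lemma aux_key (ε : ℝ) (P : ℝ → ℝ)
    (hdiff : DifferentiableOn ℝ P (Set.Ici (1:ℝ)))
    (hpos : ∀ x : ℝ, 1 ≤ x → 0 < P x)
    (hanti : StrictAntiOn P (Set.Ici (1:ℝ)))
    (hmono : MonotoneOn (derivWithin P (Set.Ici (1:ℝ))) (Set.Ici (1:ℝ)))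
    (hrefl : SatisfiesReflectionEq ε P)
    (s t : ℝ) (hse : s^2 = ε) (hs0 : 0 < s) (hs20 : 20*s < 1)
    (hst : 2*s < t) (ht10 : 10*t < 1) :
    0 < 3*t*P (1+t-t^2) + (t^2-s^2-t^3) * derivWithin P (Set.Ici (1:ℝ)) (1+t) := by
  subst hse
  have ht0 : 0 < t := lt_trans (by linarith) hst
  -- basic point facts
  have hb1 : (1:ℝ) < 1 + t := by linarith
  have hb0 : (0:ℝ) < 1 + t := by linarith
  have hxh1 : (1:ℝ) < 1 + s := by linarith
  have hxh0 : (0:ℝ) < 1 + s := by linarith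
  have ha1 : (1:ℝ) < 1 + t - t^2 := by nlinarith only [ht0, ht10]
  have hab : 1 + t - t^2 < 1 + t := by nlinarith only [ht0]
  have hinvb1 : 1/(1+t) < 1 := by rw [div_lt_one hb0]; linarith
  have hinvx1 : 1/(1+s) ≤ 1 := by rw [div_le_one hxh0]; linarith
  have hinvb0 : 0 < 1/(1+t) := by positivity
  have hinvx0 : 0 < 1/(1+s) := by positivity
  have hinvbx : 1/(1+t) < 1/(1+s) := by
    apply one_div_lt_one_div_of_lt hxh0; linarith
  have hy1 : (1:ℝ) < 2 + s^2 - 1/(1+t) := by nlinarith only [hinvb1, hs0, mul_pos hs0 hs0]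
  have hz1 : (1:ℝ) < 2 + s^2 - 1/(1+s) := by nlinarith only [hinvx1, hs0, mul_pos hs0 hs0]
  have hzy : 2 + s^2 - 1/(1+s) ≤ 2 + s^2 - 1/(1+t) := by linarith
  have hxz : 1 + s ≤ 2 + s^2 - 1/(1+s) := by
    have h1 : 1/(1+s) ≤ 1 + s^2 - s := by
      rw [div_le_iff₀ hxh0]; nlinarith only [hs0, mul_pos hs0 hs0, mul_pos (mul_pos hs0 hs0) hs0]
    linarith
  have hay : 1 + t - t^2 < 2 + s^2 - 1/(1+t) := by
    have h1 : 1/(1+t) < 1 + s^2 + t^2 - t := by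
      rw [div_lt_iff₀ hb0]; nlinarith only [hs0, ht0, mul_pos hs0 hs0, mul_pos (mul_pos hs0 hs0) ht0, mul_pos (mul_pos ht0 ht0) ht0]
    linarith
  have hyb : 2 + s^2 - 1/(1+t) < 1 + t := by
    have h1 : 1 + s^2 - t < 1/(1+t) := by
      rw [lt_div_iff₀ hb0]; nlinarith only [hs0, ht0, hst, ht10, mul_pos hs0 hs0, mul_pos (mul_pos hs0 hs0) ht0]
    linarith
  -- antitone helper
  have hante : ∀ u v : ℝ, 1 ≤ u → u ≤ v → P v ≤ P u := by
    intro u v h1 h2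
    rcases eq_or_lt_of_le h2 with h | h
    · rw [h]
    · exact (hanti (Set.mem_Ici.mpr h1) (Set.mem_Ici.mpr (by linarith)) h).le
  -- continuity of P
  have hPc : ContinuousOn P (Set.Ici 1) := hdiff.continuousOn
  -- MVT-type slope bound
  have hslope : ∀ u v : ℝ, 1 ≤ u → u < v →
      P v - P u ≤ (v - u) * derivWithin P (Set.Ici (1:ℝ)) v := by
    intro u v h1 huv
    have hcont : ContinuousOn P (Set.Icc u v) := hPc.mono (fun x hx => le_trans h1 hx.1)
    have hd : ∀ x ∈ Set.Ioo u v, HasDerivAt P (deriv P x) x := by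
      intro x hx
      have h1x : 1 < x := lt_of_le_of_lt h1 hx.1
      exact ((hdiff x (le_of_lt h1x)).differentiableAt (Ici_mem_nhds h1x)).hasDerivAt
    obtain ⟨ξ, hξ, heq⟩ := exists_hasDerivAt_eq_slope P (deriv P) huv hcont hd
    have h1ξ : 1 < ξ := lt_of_le_of_lt h1 hξ.1
    have hdw : derivWithin P (Set.Ici (1:ℝ)) ξ = deriv P ξ :=
      derivWithin_of_mem_nhds (Ici_mem_nhds h1ξ)
    have hm : derivWithin P (Set.Ici (1:ℝ)) ξ ≤ derivWithin P (Set.Ici (1:ℝ)) v :=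
      hmono (Set.mem_Ici.mpr h1ξ.le) (Set.mem_Ici.mpr (by linarith)) hξ.2.le
    have hvu : 0 < v - u := by linarith
    have hdξ : deriv P ξ = (P v - P u) / (v - u) := heq
    rw [hdw, hdξ] at hm
    calc P v - P u = (v - u) * ((P v - P u)/(v - u)) := by field_simp
    _ ≤ (v - u) * derivWithin P (Set.Ici (1:ℝ)) v := by
        apply mul_le_mul_of_nonneg_left hm hvu.le
  -- reflection instances
  have hRb := hrefl (1+t) hb1.le
  have hRx := hrefl (1+s) hxh1.le
  -- integrand continuity and integrability
  have hIcP : ContinuousOn (fun r : ℝ => P (2 + s^2 - r)) (Set.Icc 0 (1/(1+s))) := by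
    have : ContinuousOn (P ∘ (fun r : ℝ => 2 + s^2 - r)) (Set.Icc 0 (1/(1+s))) := by
      apply ContinuousOn.comp hPc ((continuous_const.sub continuous_id').continuousOn)
      intro r hr
      simp only [Set.mem_Ici]
      have h2 := hr.2
      show (1:ℝ) ≤ 2 + s^2 - r
      linarith [hz1]
    exact this
  have hIc : ContinuousOn (fun r : ℝ => r * P (2 + s^2 - r)) (Set.Icc 0 (1/(1+s))) :=
    (continuous_id'.continuousOn).mul hIcP
  have hi1 : IntervalIntegrable (fun r : ℝ => r * P (2 + s^2 - r)) MeasureTheory.volume 0 (1/(1+t)) := by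
    apply ContinuousOn.intervalIntegrable
    rw [Set.uIcc_of_le hinvb0.le]
    exact hIc.mono (fun x hx => ⟨hx.1, le_trans hx.2 hinvbx.le⟩)
  have hi2 : IntervalIntegrable (fun r : ℝ => r * P (2 + s^2 - r)) MeasureTheory.volume (1/(1+t)) (1/(1+s)) := by
    apply ContinuousOn.intervalIntegrable
    rw [Set.uIcc_of_le hinvbx.le]
    exact hIc.mono (fun x hx => ⟨le_trans hinvb0.le hx.1, hx.2⟩)
  -- integral bounds
  have hJb_ub : (∫ r in (0:ℝ)..(1/(1+t)), r * P (2 + s^2 - r))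
      ≤ (1/(1+t))^2/2 * P (2 + s^2 - 1/(1+t)) := by
    have h1 : (∫ r in (0:ℝ)..(1/(1+t)), r * P (2 + s^2 - r))
        ≤ ∫ r in (0:ℝ)..(1/(1+t)), r * P (2 + s^2 - 1/(1+t)) := by
      apply intervalIntegral.integral_mono_on hinvb0.le hi1
        ((continuous_id'.mul continuous_const).intervalIntegrable _ _)
      intro r hr
      have hP1 : P (2 + s^2 - r) ≤ P (2 + s^2 - 1/(1+t)) := by
        apply hante _ _ hy1.le
        linarith [hr.2]
      exact mul_le_mul_of_nonneg_left hP1 hr.1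
    have h2 : (∫ r in (0:ℝ)..(1/(1+t)), r * P (2 + s^2 - 1/(1+t)))
        = (1/(1+t))^2/2 * P (2 + s^2 - 1/(1+t)) := by
      rw [intervalIntegral.integral_mul_const, integral_id]
      ring
    linarith only [h1, h2]
  have hJmid_lb : ((1/(1+s))^2 - (1/(1+t))^2)/2 * P (2 + s^2 - 1/(1+t))
      ≤ ∫ r in (1/(1+t))..(1/(1+s)), r * P (2 + s^2 - r) := by
    have h1 : (∫ r in (1/(1+t))..(1/(1+s)), r * P (2 + s^2 - 1/(1+t)))
        ≤ ∫ r in (1/(1+t))..(1/(1+s)), r * P (2 + s^2 - r) := by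
      apply intervalIntegral.integral_mono_on hinvbx.le
        ((continuous_id'.mul continuous_const).intervalIntegrable _ _) hi2
      intro r hr
      have hP1 : P (2 + s^2 - 1/(1+t)) ≤ P (2 + s^2 - r) := by
        apply hante (2 + s^2 - r) _ _ (by linarith [hr.1])
        linarith [hr.2, hz1]
      apply mul_le_mul_of_nonneg_left hP1 (le_trans hinvb0.le hr.1)
    have h2 : (∫ r in (1/(1+t))..(1/(1+s)), r * P (2 + s^2 - 1/(1+t)))
        = ((1/(1+s))^2 - (1/(1+t))^2)/2 * P (2 + s^2 - 1/(1+t)) := by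
      rw [intervalIntegral.integral_mul_const, integral_id]
    linarith only [h1, h2]
  have hsplit : (∫ r in (0:ℝ)..(1/(1+t)), r * P (2 + s^2 - r))
      + (∫ r in (1/(1+t))..(1/(1+s)), r * P (2 + s^2 - r))
      = ∫ r in (0:ℝ)..(1/(1+s)), r * P (2 + s^2 - r) :=
    intervalIntegral.integral_add_adjacent_intervals hi1 hi2
  -- abbreviations
  set Jb := ∫ r in (0:ℝ)..(1/(1+t)), r * P (2 + s^2 - r) with hJbd
  set Jm := ∫ r in (1/(1+t))..(1/(1+s)), r * P (2 + s^2 - r) with hJmd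
  set Jx := ∫ r in (0:ℝ)..(1/(1+s)), r * P (2 + s^2 - r) with hJxd
  set py := P (2 + s^2 - 1/(1+t)) with hpyd
  set pz := P (2 + s^2 - 1/(1+s)) with hpzd
  set pb := P (1+t) with hpbd
  set px := P (1+s) with hpxd
  set pa := P (1+t-t^2) with hpad
  set D := derivWithin P (Set.Ici (1:ℝ)) (1+t) with hDd
  -- positivity / monotonicity of values
  have hpb0 : 0 < pb := hpos _ hb1.le
  have hpa0 : 0 < pa := hpos _ ha1.le
  have hpyb : pb ≤ py := hante _ _ hy1.le hyb.le
  have hpzy : py ≤ pz := hante _ _ hz1.le hzy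
  have hpxz : pz ≤ px := hante _ _ hxh1.le hxz
  -- cleared reflection identities
  have f1 : 2*py - 2*(1+t)^2*Jb + 1 = 2*(1+t)^3*pb := by
    have e1 : 2*(1+t)^3*((1 / (1+t)^3) * py - (1/(1+t)) * Jb + 1/(2*(1+t)^3))
        = 2*py - 2*(1+t)^2*Jb + 1 := by
      field_simp
    rw [hRb] at e1
    linarith only [e1]
  have f2 : 2*pz - 2*(1+s)^2*Jx + 1 = 2*(1+s)^3*px := by
    have e1 : 2*(1+s)^3*((1 / (1+s)^3) * pz - (1/(1+s)) * Jx + 1/(2*(1+s)^3))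
        = 2*pz - 2*(1+s)^2*Jx + 1 := by
      field_simp
    rw [hRx] at e1
    linarith only [e1]
  -- cleared integral bounds
  have f3 : 2*(1+t)^2*Jb ≤ py := by
    have h0 := mul_le_mul_of_nonneg_left hJb_ub (by positivity : (0:ℝ) ≤ 2*(1+t)^2)
    have heq : 2*(1+t)^2*((1/(1+t))^2/2 * py) = py := by
      field_simp
    linarith only [h0, heq]
  have f4 : ((1+t)^2-(1+s)^2)*py ≤ 2*(1+s)^2*(1+t)^2*Jm := by
    have h0 := mul_le_mul_of_nonneg_left hJmid_lb (by positivity : (0:ℝ) ≤ 2*(1+s)^2*(1+t)^2)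
    have heq : 2*(1+s)^2*(1+t)^2*(((1/(1+s))^2 - (1/(1+t))^2)/2 * py)
        = ((1+t)^2-(1+s)^2)*py := by
      field_simp
    linarith only [h0, heq]
  -- g1 : budget at 1+s
  have g1 : 2*(1+s)^2*Jx ≤ 1 - 2*((1+s)^3-1)*py := by
    have hx3 : (1:ℝ) ≤ (1+s)^3 := by nlinarith only [hs0, mul_pos hs0 hs0, mul_pos (mul_pos hs0 hs0) hs0]
    have p1 := mul_le_mul_of_nonneg_left hpxz (by positivity : (0:ℝ) ≤ 2*(1+s)^3)
    have p2 := mul_le_mul_of_nonneg_left hpzy (by nlinarith only [hs0, mul_pos hs0 hs0, mul_pos (mul_pos hs0 hs0) hs0] : (0:ℝ) ≤ 2*((1+s)^3-1))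
    linarith only [f2, p1, p2]
  -- g3 : main inequality for py
  have g3 : py*(2*(1+t)^2*((1+s)^3-1)+(1+t)^2+(1+s)^2)
      ≤ (1+t)^2-(1+s)^2 + 2*(1+s)^2*(1+t)^3*pb := by
    have m1 := mul_le_mul_of_nonneg_left g1 (by positivity : (0:ℝ) ≤ (1+t)^2)
    have hsplit' : 2*(1+s)^2*(1+t)^2*Jb + 2*(1+s)^2*(1+t)^2*Jm = 2*(1+s)^2*(1+t)^2*Jx := by
      rw [← hsplit]; ring
    have f1' : (1+s)^2*(2*py - 2*(1+t)^2*Jb + 1) = (1+s)^2*(2*(1+t)^3*pb) := by rw [f1]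
    linarith only [m1, hsplit', f1', f4]
  -- g4 : lower bound for pb
  have g4 : 1 ≤ (2*(1+t)^3-1)*pb := by linarith only [f1, f3, hpyb]
  have hPF := polyfact s t hs0 hs20 hst ht10
  have h1 : (0:ℝ) ≤ (1+t)^2-(1+s)^2 := by nlinarith only [hs0, ht0, hst, mul_pos hs0 ht0, mul_pos hs0 hs0]
  have h2 : (0:ℝ) ≤ 2*(1+t)^3-1 := by nlinarith only [ht0, mul_pos ht0 ht0, mul_pos (mul_pos ht0 ht0) ht0]
  have hpos1 : (0:ℝ) ≤ (1+t)*((1+t)^2-(1+s)^2)*(2*(1+t)^3-1)*(t^2-s^2-4*t^3) := by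
    have hA0 : (0:ℝ) < t^2-s^2-4*t^3 := by nlinarith only [hs0, ht0, hst, ht10, mul_pos hs0 hs0, mul_pos ht0 ht0, mul_pos (mul_pos ht0 ht0) ht0, mul_pos hs0 ht0]
    exact mul_nonneg (mul_nonneg (mul_nonneg hb0.le h1) h2) hA0.le
  -- contradiction setup
  by_contra hcon
  push_neg at hcon
  -- hcon : 3*t*pa + (t^2-s^2-t^3)*D ≤ 0
  have hA0 : 0 < t^2-s^2-4*t^3 := by nlinarith only [hs0, ht0, hst, ht10, mul_pos hs0 hs0, mul_pos ht0 ht0, mul_pos (mul_pos ht0 ht0) ht0, mul_pos hs0 ht0]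
  have hbd0 : 0 < t^2-s^2-s^2*t := by nlinarith only [hs0, ht0, hst, ht10, mul_pos hs0 hs0, mul_pos (mul_pos hs0 hs0) ht0]
  -- g5
  have hf6 : pb - pa ≤ t^2*D := by
    have h := hslope (1+t-t^2) (1+t) ha1.le hab
    have h2 : (1+t) - (1+t-t^2) = t^2 := by ring
    rw [h2] at h
    exact h
  have g5 : (t^2-s^2-4*t^3)*D ≤ -(3*t*pb) := by
    have hp := mul_le_mul_of_nonneg_left (show pb - t^2*D ≤ pa by linarith)
      (by positivity : (0:ℝ) ≤ 3*t)
    linarith only [hcon, hp]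
  -- slope bound between y and b
  have hf7 : (1+t)*(pb - py) ≤ (t^2-s^2-s^2*t)*D := by
    have h := hslope (2 + s^2 - 1/(1+t)) (1+t) hy1.le hyb
    have hm := mul_le_mul_of_nonneg_left h hb0.le
    have hid0 : (1+t)*((1+t) - (2 + s^2 - 1/(1+t))) = t^2-s^2-s^2*t := by
      field_simp
      ring
    have hid : (1+t)*(((1+t) - (2 + s^2 - 1/(1+t)))*D) = (t^2-s^2-s^2*t)*D := by
      rw [← mul_assoc, hid0]
    linarith only [hm, hid]
  have hQ0 : (0:ℝ) < 2*(1+t)^2*((1+s)^3-1)+(1+t)^2+(1+s)^2 := by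
    have hx3 : (0:ℝ) ≤ (1+t)^2*((1+s)^3-1) :=
      mul_nonneg (sq_nonneg _) (by nlinarith only [hs0, mul_pos hs0 hs0, mul_pos (mul_pos hs0 hs0) hs0])
    nlinarith only [hx3, pow_pos hb0 2, pow_pos hxh0 2]
  -- abstract the large polynomial scalars
  set A := t^2-s^2-4*t^3 with hAdef
  set B := t^2-s^2-s^2*t with hBdef
  set W := (1+t)^2-(1+s)^2 with hWdef
  set Q := 2*(1+t)^2*((1+s)^3-1)+(1+t)^2+(1+s)^2 with hQdef
  set x2 := (1+s)^2 with hx2def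
  set b3 := (1+t)^3 with hb3def
  -- g6
  have g6 : 3*t*B*pb ≤ A*(1+t)*(py - pb) := by
    have m1 := mul_le_mul_of_nonneg_left hf7 hA0.le
    have m2 := mul_le_mul_of_nonneg_left g5 hbd0.le
    linarith only [m1, m2]
  -- g7
  have g7 : ((A*(1+t) + 3*t*B)*Q - 2*A*x2*((1+t)*b3)) * pb ≤ A*(1+t)*W := by
    have m3 := mul_le_mul_of_nonneg_left g3 (mul_pos hA0 hb0).le
    have m4 := mul_le_mul_of_nonneg_left g6 hQ0.le
    linarith only [m3, m4]
  -- final contradiction with the polynomial fact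
  have hR0 : (0:ℝ) < (A*(1+t) + 3*t*B)*Q - 2*A*x2*((1+t)*b3) := by linarith only [hpos1, hPF]
  have g4' : 1 ≤ (2*b3-1)*pb := g4
  have m5 := mul_le_mul_of_nonneg_left g4' hR0.le
  have m6 := mul_le_mul_of_nonneg_left g7 h2
  linarith only [m5, m6, hPF]

/-- The key positivity estimate:
3γ√ε·P(1 + γ√ε − γ²ε) + ((γ² − 1)ε − γ³ε^{3/2})·P'(1 + γ√ε) > 0
for 2 < γ < 1/(10√ε). -/
theorem key_positivity (ε : ℝ) (hε0 : 0 < ε) (hε1 : ε < 1/400) (P : ℝ → ℝ)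
    (hdiff : DifferentiableOn ℝ P (Set.Ici (1:ℝ)))
    (hpos : ∀ x : ℝ, 1 ≤ x → 0 < P x)
    (hanti : StrictAntiOn P (Set.Ici (1:ℝ)))
    (hmono : MonotoneOn (derivWithin P (Set.Ici (1:ℝ))) (Set.Ici (1:ℝ)))
    (hrefl : SatisfiesReflectionEq ε P) :
    ∀ γ : ℝ, 2 < γ → γ < 1 / (10 * Real.sqrt ε) →
      0 < 3 * γ * Real.sqrt ε * P (1 + γ * Real.sqrt ε - γ ^ 2 * ε)
        + ((γ ^ 2 - 1) * ε - γ ^ 3 * ε ^ ((3:ℝ)/2))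
          * derivWithin P (Set.Ici (1:ℝ)) (1 + γ * Real.sqrt ε) := by
  intro γ hγ2 hγub
  have hs0 : 0 < Real.sqrt ε := Real.sqrt_pos.mpr hε0
  have hse : (Real.sqrt ε)^2 = ε := Real.sq_sqrt hε0.le
  set s := Real.sqrt ε with hs_def
  have hs20 : 20*s < 1 := by nlinarith
  set t := γ * s with ht_def
  have ht2s : 2*s < t := by
    rw [ht_def]; nlinarith
  have ht10 : 10*t < 1 := by
    rw [ht_def]
    have h1 : γ * (10*s) < (1/(10*s)) * (10*s) := by
      apply mul_lt_mul_of_pos_right hγub (by linarith)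
    have h2 : (1/(10*s)) * (10*s) = 1 := by
      field_simp
    nlinarith [h1, h2]
  have key := aux_key ε P hdiff hpos hanti hmono hrefl s t hse hs0 hs20 ht2s ht10
  have harg : 1 + γ * s - γ^2*ε = 1 + t - t^2 := by rw [ht_def, ← hse]; ring
  have hcoef : (γ^2 - 1)*ε - γ^3*ε^((3:ℝ)/2) = t^2 - s^2 - t^3 := by
    have h1 : ε ^ ((3:ℝ)/2) = s^3 := by
      rw [show ((3:ℝ)/2) = (1/2) * 3 by norm_num, Real.rpow_mul hε0.le]
      rw [show ((3:ℝ)) = ((3:ℕ):ℝ) by norm_num, Real.rpow_natCast, ← Real.sqrt_eq_rpow]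
    rw [h1, ht_def, ← hse]; ring
  have h3t : 3 * γ * s = 3 * t := by rw [ht_def]; ring
  have hpt : 1 + γ * s = 1 + t := by rw [ht_def]
  rw [harg, hcoef, h3t, hpt]
  linarith [key]
end
end

section
/- There exists ε₀ > 0 such that for every ε ∈ (0, ε₀) the following holds. Define the sequence (xₙ) by x₁ = 1 and x_{n+1} = 2 + ε − 1/xₙ for n ≥ 1. Then for every natural number n with 1 ≤ n ≤ 1/(2√ε), one has |xₙ − (1 + (n−1)ε)| ≤ 10·n²·ε·√ε. -/
noncomputable section

set_option maxHeartbeats 1000000 in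
/-- Asymptotics of the recursively defined sequence x₁ = 1,
x_{n+1} = 2 + ε − 1/xₙ: for n ≤ 1/(2√ε), xₙ = 1 + (n−1)ε up to an error of at
most 10·n²·ε·√ε. -/
theorem sequence_asymptotics :
    ∃ ε₀ : ℝ, 0 < ε₀ ∧ ∀ ε : ℝ, 0 < ε → ε < ε₀ →
      ∀ X : ℕ → ℝ, X 1 = 1 → (∀ n : ℕ, 1 ≤ n → X (n + 1) = 2 + ε - 1 / X n) →
        ∀ n : ℕ, 1 ≤ n → (n : ℝ) ≤ 1 / (2 * Real.sqrt ε) →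
          |X n - (1 + ((n : ℝ) - 1) * ε)| ≤ 10 * (n : ℝ) ^ 2 * ε * Real.sqrt ε := by
  refine ⟨1/1000000, by norm_num, ?_⟩
  intro ε hε hε' X hX1 hrec
  set s := Real.sqrt ε with hs
  have hs0 : 0 < s := Real.sqrt_pos.mpr hε
  have hs2 : s ^ 2 = ε := Real.sq_sqrt hε.le
  have hslt : s < 1/1000 := by
    have h : s < Real.sqrt (1/1000000) := Real.sqrt_lt_sqrt hε.le hε'
    have : Real.sqrt (1/1000000) = 1/1000 := by
      rw [show (1/1000000 : ℝ) = (1/1000)^2 by norm_num, Real.sqrt_sq (by norm_num)]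
    linarith [this ▸ h]
  intro n hn
  induction n, hn using Nat.le_induction with
  | base =>
    intro _
    simp only [Nat.cast_one, hX1]
    have : |(0:ℝ)| ≤ 10 * 1 * ε * s := by
      simp; positivity
    simpa using by norm_num [hX1] <;> positivity
  | succ n hn ih =>
    intro hb
    have hcast : ((n+1 : ℕ) : ℝ) = (n:ℝ) + 1 := by push_cast; ring
    have hnb : (n : ℝ) ≤ 1 / (2 * s) := by
      have : (n:ℝ) ≤ ((n+1:ℕ):ℝ) := by push_cast; linarith
      linarith
    have he := ih hnb
    have hn1 : (1:ℝ) ≤ (n:ℝ) := by exact_mod_cast hn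
    have h2ns : (n:ℝ) * (2 * s) ≤ 1 := by
      rw [← le_div_iff₀ (by positivity)]; exact hnb
    have hns : (n:ℝ) * s ≤ 1/2 := by linarith
    have hnε : (n:ℝ) * ε ≤ s/2 := by nlinarith [hs0, hn1]
    set a : ℝ := 1 + ((n:ℝ) - 1) * ε with ha
    have ha1 : 1 ≤ a := by nlinarith [hε.le, hn1]
    have hn2e : (n:ℝ)^2 * ε ≤ 1/4 := by nlinarith [hns, hs0]
    have he5 : |X n - a| ≤ 5 * (n:ℝ) * ε := by
      have : 10 * (n:ℝ)^2 * ε * s ≤ 5 * (n:ℝ) * ε := by nlinarith [hε.le, hn1, hns]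
      linarith [he]
    have hXlb : 1 - 5 * (n:ℝ) * ε ≤ X n := by
      have := abs_le.mp he5
      linarith [this.1, ha1]
    have hXpos : 0 < X n := by linarith [hXlb, hnε, hslt]
    have haX : 1 - 5 * (n:ℝ) * ε ≤ a * X n := by nlinarith [hXpos, ha1, hXlb]
    have haXpos : 0 < a * X n := by positivity
    have hXne : X n ≠ 0 := ne_of_gt hXpos
    have hane : a ≠ 0 := by positivity
    -- key identity
    have heq : X (n+1) - (1 + (((n:ℝ)+1) - 1) * ε)
        = (X n - a) / (a * X n) - ((n:ℝ)-1)^2 * ε^2 / a := by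
      rw [hrec n hn]
      field_simp
      ring
    -- bound on 1/(aX): (1+7nε)(aX) ≥ 1
    have h7pos : (0:ℝ) ≤ 1 + 7 * (n:ℝ) * ε := by positivity
    have hmul : 1 ≤ (1 + 7 * (n:ℝ) * ε) * (a * X n) := by
      have key := mul_le_mul_of_nonneg_left haX h7pos
      have hnn : (0:ℝ) ≤ (n:ℝ) * ε := by positivity
      have hsm : (n:ℝ) * ε ≤ 1/2000 := by linarith [hnε, hslt]
      have hsmall : 35 * ((n:ℝ) * ε) * ((n:ℝ) * ε) ≤ (n:ℝ) * ε := by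
        nlinarith [mul_le_mul_of_nonneg_left hsm hnn, hnn]
      nlinarith [key, hsmall, hnn]
    have h1 : |X n - a| / (a * X n) ≤ |X n - a| * (1 + 7 * (n:ℝ) * ε) := by
      rw [div_le_iff₀ haXpos]
      calc |X n - a| = |X n - a| * 1 := (mul_one _).symm
        _ ≤ |X n - a| * ((1 + 7 * (n:ℝ) * ε) * (a * X n)) := by
            exact mul_le_mul_of_nonneg_left hmul (abs_nonneg _)
        _ = |X n - a| * (1 + 7 * (n:ℝ) * ε) * (a * X n) := by ring
    have h2 : ((n:ℝ)-1)^2 * ε^2 / a ≤ (n:ℝ)^2 * ε^2 := by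
      have hnum : ((n:ℝ)-1)^2 * ε^2 ≤ (n:ℝ)^2 * ε^2 := by nlinarith [hn1, sq_nonneg ε]
      have := div_le_self (by positivity : (0:ℝ) ≤ ((n:ℝ)-1)^2 * ε^2) ha1
      linarith
    have h2' : (0:ℝ) ≤ ((n:ℝ)-1)^2 * ε^2 / a := by positivity
    have hbound : |X (n+1) - (1 + (((n:ℝ)+1) - 1) * ε)|
        ≤ |X n - a| * (1 + 7 * (n:ℝ) * ε) + (n:ℝ)^2 * ε^2 := by
      rw [heq]
      calc |(X n - a) / (a * X n) - ((n:ℝ)-1)^2 * ε^2 / a|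
          ≤ |(X n - a) / (a * X n)| + |((n:ℝ)-1)^2 * ε^2 / a| := abs_sub _ _
        _ = |X n - a| / (a * X n) + ((n:ℝ)-1)^2 * ε^2 / a := by
            rw [abs_div, abs_of_pos haXpos, abs_of_nonneg h2']
        _ ≤ |X n - a| * (1 + 7 * (n:ℝ) * ε) + (n:ℝ)^2 * ε^2 := by linarith
    -- final arithmetic
    have hfinal : |X n - a| * (1 + 7 * (n:ℝ) * ε) + (n:ℝ)^2 * ε^2
        ≤ 10 * ((n:ℝ)+1)^2 * ε * s := by
      have habs0 : (0:ℝ) ≤ |X n - a| := abs_nonneg _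
      have hεpos : (0:ℝ) < ε := hε
      have hnes : (0:ℝ) ≤ (n:ℝ) * ε * s := by positivity
      have hA := mul_le_mul_of_nonneg_right he h7pos
      have hB := mul_le_mul_of_nonneg_right hn2e hnes
      have hC := mul_le_mul_of_nonneg_right hnε (show (0:ℝ) ≤ (n:ℝ) * ε by positivity)
      nlinarith [hA, hB, hC, hnes, hs0.le, hε.le, hn1,
        mul_nonneg hε.le hs0.le,
        mul_nonneg (mul_nonneg (sq_nonneg (n:ℝ)) hε.le) hs0.le]
    rw [hcast]
    linarith [hbound, hfinal]
end
end
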